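/- Let a > 0, b ∈ ℝ with a² < 4b², n ∈ ℕ*, ν = π/ℓ, and μ₋ = (a − i√(4b²−a²))/2. The function φ₋(z) = (z−μ₋)e^{2izℓ} − (z+μ₋) has a zero with real part nν if and only if a < 2nν and e^{2nπ√(4b²/a² − 1)} = (2nν + a)/(2nν − a); in that case the zero is unique and equals z = nν − i nν √(4b²/a² − 1). -/

import Mathlib

open Complex

/-- For `a > 0`, `a² < 4b²`, `μ₋ = (a - i√(4b²-a²))/2` and `n ≥ 1`:
`φ₋` has a zero with real part `nν` iff `a < 2nν` and
`e^{2nπ√(4b²/a² - 1)} = (2nν+a)/(2nν-a)`; in that case the zero is unique and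
equals `nν - i nν √(4b²/a² - 1)`. -/
theorem phi_minus_zero_on_line (ℓ : ℝ) (hℓ : 0 < ℓ) (a b : ℝ)
    (ha : 0 < a) (hab : a ^ 2 < 4 * b ^ 2) (n : ℕ) (hn : 1 ≤ n)
    (ν : ℝ) (hν : ν = Real.pi / ℓ)
    (μm : ℂ) (hμm : μm = ((a : ℂ) - I * (Real.sqrt (4 * b ^ 2 - a ^ 2) : ℂ)) / 2)
    (φm : ℂ → ℂ)
    (hφm : φm = fun z => (z - μm) * exp (2 * I * z * ℓ) - (z + μm)) :
    ((∃ z : ℂ, φm z = 0 ∧ z.re = n * ν) ↔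
      (a < 2 * n * ν ∧
        Real.exp (2 * n * Real.pi * Real.sqrt (4 * b ^ 2 / a ^ 2 - 1))
          = (2 * n * ν + a) / (2 * n * ν - a)))
    ∧ (∀ z : ℂ, φm z = 0 → z.re = n * ν →
        z = (n : ℂ) * ν - I * (n : ℂ) * ν * (Real.sqrt (4 * b ^ 2 / a ^ 2 - 1) : ℂ)) := by
  have hℓ' : ℓ ≠ 0 := ne_of_gt hℓ
  have ha' : a ≠ 0 := ne_of_gt ha
  set s : ℝ := Real.sqrt (4 * b ^ 2 - a ^ 2) with hsdef
  have hs2 : s ^ 2 = 4 * b ^ 2 - a ^ 2 := Real.sq_sqrt (by linarith)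
  have hspos : 0 < s := Real.sqrt_pos.mpr (by linarith)
  have hπ : Real.pi = ν * ℓ := by rw [hν]; field_simp
  have hνpos : 0 < ν := by
    rw [hν]; exact div_pos Real.pi_pos hℓ
  have hnν : 0 < (n : ℝ) * ν :=
    mul_pos (by exact_mod_cast Nat.pos_of_ne_zero (by omega)) hνpos
  have hsq : Real.sqrt (4 * b ^ 2 / a ^ 2 - 1) = s / a := by
    rw [show 4 * b ^ 2 / a ^ 2 - 1 = (4 * b ^ 2 - a ^ 2) / a ^ 2 by field_simp]
    rw [Real.sqrt_div (by linarith), Real.sqrt_sq ha.le]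
  have hμre : μm.re = a / 2 := by simp [hμm]
  have hμim : μm.im = -(s / 2) := by simp [hμm]; ring
  -- exp computation on the vertical line
  have hexp : ∀ z : ℂ, z.re = n * ν →
      Complex.exp (2*I*z*ℓ) = (Real.exp (-(2*ℓ*z.im)) : ℂ) := by
    intro z hz
    have h : 2*I*z*ℓ = ((-(2*ℓ*z.im) : ℝ) : ℂ) + (n : ℤ) * (2*(Real.pi:ℂ)*I) := by
      apply Complex.ext <;>
        simp [Complex.mul_re, Complex.mul_im, hz, hπ] <;> ring
    rw [h, Complex.exp_add, Complex.exp_int_mul_two_pi_mul_I, mul_one, ← Complex.ofReal_exp]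
  -- forward analysis
  have aux : ∀ z : ℂ, φm z = 0 → z.re = n * ν →
      (a < 2 * n * ν ∧
        Real.exp (2 * n * Real.pi * Real.sqrt (4 * b ^ 2 / a ^ 2 - 1))
          = (2 * n * ν + a) / (2 * n * ν - a)) ∧
      z = (n : ℂ) * ν - I * (n : ℂ) * ν * (Real.sqrt (4 * b ^ 2 / a ^ 2 - 1) : ℂ) := by
    intro z hz hre
    rw [hφm] at hz
    simp only at hz
    rw [hexp z hre] at hz
    set t : ℝ := Real.exp (-(2*ℓ*z.im)) with htdef
    have htpos : 0 < t := Real.exp_pos _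
    have heq : ((t:ℂ) - 1) * z = ((t:ℂ) + 1) * μm := by linear_combination hz
    have hR : (t - 1) * (n * ν) = (t + 1) * (a / 2) := by
      have := congrArg Complex.re heq
      simpa [Complex.mul_re, hμre, hre] using this
    have hI : (t - 1) * z.im = (t + 1) * (-(s / 2)) := by
      have := congrArg Complex.im heq
      simpa [Complex.mul_im, hμim] using this
    have ht1 : 1 < t := by nlinarith
    have halt : a < 2 * n * ν := by nlinarith
    have him : z.im = -(n * ν * s) / a := by
      have key : (t - 1) * (z.im * a + n * ν * s) = 0 := by
        linear_combination a * hI + s * hR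
      have h2 : z.im * a + n * ν * s = 0 := by
        rcases mul_eq_zero.mp key with h | h
        · linarith
        · exact h
      rw [eq_div_iff ha']
      linarith
    have htval : t = (2 * n * ν + a) / (2 * n * ν - a) := by
      rw [eq_div_iff (by linarith)]
      linear_combination 2 * hR
    have hexps : Real.exp (2 * n * Real.pi * (s / a)) = t := by
      rw [htdef]
      congr 1
      rw [him, hπ]
      field_simp
    refine ⟨⟨halt, by rw [hsq, hexps, htval]⟩, ?_⟩
    apply Complex.ext
    · simp [hre]
    · rw [hsq]
      simp [him]
      ring
  constructor
  · constructor
    · rintro ⟨z, hz, hre⟩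
      exact (aux z hz hre).1
    · rintro ⟨halt, hcond⟩
      refine ⟨(n : ℂ) * ν - I * (n : ℂ) * ν * ((s / a : ℝ) : ℂ), ?_, ?_⟩
      · rw [hφm]
        simp only
        have hre : ((n : ℂ) * ν - I * (n : ℂ) * ν * ((s / a : ℝ) : ℂ)).re = n * ν := by
          simp
        have him : ((n : ℂ) * ν - I * (n : ℂ) * ν * ((s / a : ℝ) : ℂ)).im = -(n * ν * (s / a)) := by
          simp
        rw [hexp _ hre, him]
        have : Real.exp (-(2 * ℓ * -(↑n * ν * (s / a)))) = (2 * n * ν + a) / (2 * n * ν - a) := by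
          rw [← hcond, hsq]
          congr 1
          rw [hπ]; field_simp
        rw [this, hμm]
        have h1 : ((2 * (n:ℝ) * ν - a : ℝ) : ℂ) ≠ 0 := by
          exact Complex.ofReal_ne_zero.mpr (show (0:ℝ) < 2 * (n:ℝ) * ν - a by linarith).ne'
        have hac : (a : ℂ) ≠ 0 := Complex.ofReal_ne_zero.mpr ha'
        push_cast at h1 ⊢
        field_simp
        have h1' : (n:ℂ) * ν * 2 - a ≠ 0 := by
          rw [show (n:ℂ) * ν * 2 = 2 * n * ν by ring]; exact h1
        rw [div_self h1']
        ring
      · simp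
  · intro z hz hre
    exact (aux z hz hre).2
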